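/- Let R be a ring and let M be a subinjective extension-reflecting (si.e.r.) R-module. Then every cyclic R-module is M-subinjective if and only if every finitely generated R-module is M-subinjective. -/

import Mathlib

universe u

/-- `IsSubinjective R B A` means: the `R`-module `B` is `A`-subinjective, i.e. for every
`R`-module `C`, every injective `R`-linear map `i : A → C` and every `R`-linear map
`f : A → B`, there is an `R`-linear map `g : C → B` with `g ∘ i = f`. -/
def IsSubinjective (R : Type u) [Ring R] (B : Type u) [AddCommGroup B] [Module R B]
    (A : Type u) [AddCommGroup A] [Module R A] : Prop :=
  ∀ (C : Type u) [AddCommGroup C] [Module R C] (i : A →ₗ[R] C),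
    Function.Injective i → ∀ f : A →ₗ[R] B, ∃ g : C →ₗ[R] B, g ∘ₗ i = f

/-- `IsSubprojective R B A` means: the `R`-module `B` is `A`-subprojective, i.e. for every
`R`-module `C`, every surjective `R`-linear map `g : C → A` and every `R`-linear map
`f : B → A`, there is an `R`-linear map `h : B → C` with `g ∘ h = f`. -/
def IsSubprojective (R : Type u) [Ring R] (B : Type u) [AddCommGroup B] [Module R B]
    (A : Type u) [AddCommGroup A] [Module R A] : Prop :=
  ∀ (C : Type u) [AddCommGroup C] [Module R C] (g : C →ₗ[R] A),
    Function.Surjective g → ∀ f : B →ₗ[R] A, ∃ h : B →ₗ[R] C, g ∘ₗ h = f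

/-- `M` is subinjective extension-reflecting (si.e.r.): for every short exact sequence
`0 → A → B → C → 0`, if `A` and `C` are `M`-subinjective, then so is `B`. -/
def IsSIER (R : Type u) [Ring R] (M : Type u) [AddCommGroup M] [Module R M] : Prop :=
  ∀ (A B C : Type u) [AddCommGroup A] [Module R A] [AddCommGroup B] [Module R B]
    [AddCommGroup C] [Module R C] (f : A →ₗ[R] B) (g : B →ₗ[R] C),
    Function.Injective f → Function.Surjective g → Function.Exact f g →
    IsSubinjective R A M → IsSubinjective R C M → IsSubinjective R B M

/-- `M` is subprojective extension-reflecting (sp.e.r.): for every short exact sequence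
`0 → A → B → C → 0`, if `A` and `C` are `M`-subprojective, then so is `B`. -/
def IsSPER (R : Type u) [Ring R] (M : Type u) [AddCommGroup M] [Module R M] : Prop :=
  ∀ (A B C : Type u) [AddCommGroup A] [Module R A] [AddCommGroup B] [Module R B]
    [AddCommGroup C] [Module R C] (f : A →ₗ[R] B) (g : B →ₗ[R] C),
    Function.Injective f → Function.Surjective g → Function.Exact f g →
    IsSubprojective R A M → IsSubprojective R C M → IsSubprojective R B M

/-- For an si.e.r. module `M`: every cyclic module is `M`-subinjective if and only if every
finitely generated module is `M`-subinjective. -/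

theorem sier_aux (R : Type u) [Ring R] (M : Type u) [AddCommGroup M] [Module R M]
    (hM : IsSIER R M)
    (hcyc : ∀ (N : Type u) [AddCommGroup N] [Module R N],
        (∃ x : N, Submodule.span R {x} = ⊤) → IsSubinjective R N M) :
    ∀ n : ℕ, ∀ (N : Type u) [AddCommGroup N] [Module R N] (s : Finset N),
      s.card ≤ n → Submodule.span R (s : Set N) = ⊤ → IsSubinjective R N M := by
  intro n
  induction n with
  | zero =>
    intro N _ _ s hs hspan
    have hse : s = ∅ := Finset.card_eq_zero.mp (Nat.le_zero.mp hs)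
    subst hse
    apply hcyc
    refine ⟨0, ?_⟩
    simp only [Finset.coe_empty, Submodule.span_empty] at hspan
    rw [eq_top_iff, ← hspan]
    exact bot_le
  | succ n ih =>
    intro N _ _ s hs hspan
    classical
    rcases s.eq_empty_or_nonempty with rfl | ⟨x, hx⟩
    · exact ih N ∅ (Nat.zero_le n) hspan
    · set A : Submodule R N := Submodule.span R {x} with hA
      -- A is cyclic
      have hAcyc : IsSubinjective R A M := by
        apply hcyc
        refine ⟨⟨x, Submodule.mem_span_singleton_self x⟩, ?_⟩
        rw [eq_top_iff]
        rintro ⟨a, ha⟩ -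
        rw [Submodule.mem_span_singleton] at ha
        obtain ⟨r, rfl⟩ := ha
        exact Submodule.mem_span_singleton.mpr ⟨r, rfl⟩
      -- quotient is generated by images of s.erase x
      have hQ : IsSubinjective R (N ⧸ A) M := by
        refine ih (N ⧸ A) ((s.erase x).image A.mkQ) ?_ ?_
        · have h1 : ((s.erase x).image A.mkQ).card ≤ (s.erase x).card :=
            Finset.card_image_le
          have h2 : (s.erase x).card = s.card - 1 := Finset.card_erase_of_mem hx
          have h3 : 1 ≤ s.card := Finset.card_pos.mpr ⟨x, hx⟩
          omega
        · rw [eq_top_iff]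
          rintro q -
          obtain ⟨y, rfl⟩ := A.mkQ_surjective q
          have hy : y ∈ Submodule.span R (s : Set N) := hspan ▸ Submodule.mem_top
          have : A.mkQ y ∈ Submodule.map A.mkQ (Submodule.span R (s : Set N)) :=
            Submodule.mem_map_of_mem hy
          rw [Submodule.map_span] at this
          refine Submodule.span_le.mpr ?_ this
          rintro - ⟨z, hz, rfl⟩
          rcases eq_or_ne z x with rfl | hzx
          · have : A.mkQ z = 0 := by
              rw [Submodule.mkQ_apply, Submodule.Quotient.mk_eq_zero]
              exact Submodule.mem_span_singleton_self z
            rw [this]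
            exact Submodule.zero_mem _
          · exact Submodule.subset_span (Finset.mem_coe.mpr
              (Finset.mem_image.mpr ⟨z, Finset.mem_erase.mpr ⟨hzx, hz⟩, rfl⟩))
      have hex : Function.Exact A.subtype A.mkQ := by
        intro y
        rw [Submodule.mkQ_apply, Submodule.Quotient.mk_eq_zero]
        constructor
        · intro h
          exact ⟨⟨y, h⟩, rfl⟩
        · rintro ⟨⟨z, hz⟩, rfl⟩
          exact hz
      exact hM A N (N ⧸ A) A.subtype A.mkQ A.injective_subtype A.mkQ_surjective
        hex hAcyc hQ

theorem sier_cyclic_iff_fg_subinjective (R : Type u) [Ring R]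
    (M : Type u) [AddCommGroup M] [Module R M] (hM : IsSIER R M) :
    (∀ (N : Type u) [AddCommGroup N] [Module R N],
        (∃ x : N, Submodule.span R {x} = ⊤) → IsSubinjective R N M) ↔
      (∀ (N : Type u) [AddCommGroup N] [Module R N], Module.Finite R N →
        IsSubinjective R N M) := by
  constructor
  · intro hcyc N _ _ hfin
    obtain ⟨s, hs⟩ := hfin.fg_top
    exact sier_aux R M hM hcyc s.card N s le_rfl hs
  · intro hfg N _ _ ⟨x, hx⟩
    have : Module.Finite R N := ⟨⟨{x}, by simpa using hx⟩⟩
    exact hfg N this
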